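/- Let g be a nilpotent Lie algebra with Z(g) = [g,g] of odd dimension, such that ad_x : g → [g,g] is surjective for every x ∉ Z(g). Then g admits no integrable complex structure. -/

import Mathlib

open Module

lemma even_finrank_of_sq_neg_one {V : Type*} [AddCommGroup V] [Module ℝ V]
    [Module.Finite ℝ V] (f : V →ₗ[ℝ] V) (h : f ∘ₗ f = -LinearMap.id) :
    Even (finrank ℝ V) := by
  have hdet : LinearMap.det f * LinearMap.det f = (-1 : ℝ) ^ finrank ℝ V := by
    have := congrArg LinearMap.det h
    rwa [LinearMap.det_comp, show (-LinearMap.id : V →ₗ[ℝ] V) = (-1 : ℝ) • LinearMap.id by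
      simp, LinearMap.det_smul, LinearMap.det_id, mul_one] at this
  rcases Nat.even_or_odd (finrank ℝ V) with he | ho
  · exact he
  · exfalso
    rw [ho.neg_one_pow] at hdet
    nlinarith [sq_nonneg (LinearMap.det f)]

/-- A nilpotent Lie algebra with `Z(g) = [g,g]` of odd dimension, such that `ad_x`
surjects onto `[g,g]` for every non-central `x`, admits no integrable complex structure. -/
theorem stmt_16 (g : Type*) [LieRing g] [LieAlgebra ℝ g] [LieRing.IsNilpotent g]
    [Module.Finite ℝ g]
    (hZC : (LieAlgebra.center ℝ g : Submodule ℝ g) =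
      (LieAlgebra.derivedSeries ℝ g 1 : Submodule ℝ g))
    (hodd : Odd (Module.finrank ℝ (LieAlgebra.center ℝ g : Submodule ℝ g)))
    (hsurj : ∀ x : g, x ∉ LieAlgebra.center ℝ g →
      ∀ c ∈ LieAlgebra.derivedSeries ℝ g 1, ∃ y : g, ⁅x, y⁆ = c) :
    ¬ ∃ J : g →ₗ[ℝ] g, J ∘ₗ J = -LinearMap.id ∧
      ∀ x y : g, ⁅x, y⁆ - ⁅J x, J y⁆ + J ⁅J x, y⁆ + J ⁅x, J y⁆ = 0 := by
  rintro ⟨J, hJ2, hN⟩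
  have hJ2' : ∀ x : g, J (J x) = -x := fun x => congrFun (congrArg (fun f => f.toFun) hJ2) x
  -- brackets lie in the derived series
  have hbr : ∀ a b : g, ⁅a, b⁆ ∈ LieAlgebra.derivedSeries ℝ g 1 := by
    intro a b
    rw [LieAlgebra.derivedSeries_def, LieAlgebra.derivedSeriesOfIdeal_succ,
      LieAlgebra.derivedSeriesOfIdeal_zero]
    exact LieSubmodule.lie_mem_lie (LieSubmodule.mem_top a) (LieSubmodule.mem_top b)
  -- center membership characterization
  have hcent : ∀ x : g, x ∈ LieAlgebra.center ℝ g ↔ ∀ y : g, ⁅x, y⁆ = 0 := by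
    intro x
    constructor
    · intro hx y
      have := hx y
      rw [← lie_skew, this, neg_zero]
    · intro h y
      have := h y
      rw [← lie_skew, this, neg_zero]
  -- J preserves the center
  have hJZ : ∀ x ∈ (LieAlgebra.center ℝ g : Submodule ℝ g),
      J x ∈ (LieAlgebra.center ℝ g : Submodule ℝ g) := by
    intro x hx
    have hx' : ∀ y : g, ⁅x, y⁆ = 0 := (hcent x).1 hx
    -- Nijenhuis with x central:  ⁅J x, J y⁆ = J ⁅J x, y⁆
    have key : ∀ y : g, ⁅J x, J y⁆ = J ⁅J x, y⁆ := by
      intro y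
      have := hN x y
      have h1 : ⁅x, y⁆ = 0 := hx' y
      have h2 : ⁅x, J y⁆ = 0 := hx' (J y)
      rw [h1, h2, map_zero, add_zero, zero_sub, neg_add_eq_zero] at this
      exact this
    by_cases hJx : J x ∈ LieAlgebra.center ℝ g
    · exact hJx
    · exfalso
      -- x ∈ derived series, so x = ⁅J x, y⁆ for some y
      have hxd : x ∈ LieAlgebra.derivedSeries ℝ g 1 := by
        have : x ∈ (LieAlgebra.derivedSeries ℝ g 1 : Submodule ℝ g) := hZC ▸ hx
        exact this
      obtain ⟨y, hy⟩ := hsurj (J x) hJx x hxd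
      -- then J x = J ⁅J x, y⁆ = ⁅J x, J y⁆ ∈ derived = center
      have : J x ∈ LieAlgebra.derivedSeries ℝ g 1 := by
        rw [← hy, ← key]
        exact hbr (J x) (J y)
      apply hJx
      have h2 : J x ∈ (LieAlgebra.derivedSeries ℝ g 1 : Submodule ℝ g) := this
      have h3 : J x ∈ (LieAlgebra.center ℝ g : Submodule ℝ g) := hZC.symm ▸ h2
      exact h3
  -- restrict J to the center
  set Z : Submodule ℝ g := (LieAlgebra.center ℝ g : Submodule ℝ g) with hZ
  let Jz : Z →ₗ[ℝ] Z := J.restrict hJZ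
  have hJz2 : Jz ∘ₗ Jz = -LinearMap.id := by
    ext ⟨v, hv⟩
    simp [Jz, LinearMap.restrict_apply, hJ2' v]
  have := even_finrank_of_sq_neg_one Jz hJz2
  exact (Nat.not_even_iff_odd.2 hodd) this
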